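/- Let (X, G, Φ) be a dynamical system where X is a compact totally disconnected Hausdorff space and G is a finitely generated group, and let S be a finite generator of G. Then Φ has the S-shadowing property if and only if (X, G, Φ) is conjugate to the inverse limit of an inverse system of dynamical systems, satisfying the Mittag-Leffler condition, each of whose terms is a shift of finite type (a subshift of a full shift over some finite alphabet that is of finite type over some finite subset of G, with the shift G-action). -/

import Mathlib

open Set

universe u

/-! ### Dynamical systems: actions of a countable discrete group by homeomorphisms -/

/-- An action of a group `G` on a topological space `X`: each `act g` is a homeomorphism
(continuity of the inverse follows from `act g⁻¹`). -/
structure DynAction (G X : Type u) [Group G] [TopologicalSpace X] where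
  act : G → X → X
  continuous_act : ∀ g : G, Continuous (act g)
  act_one : ∀ x : X, act 1 x = x
  act_mul : ∀ (g g' : G) (x : X), act (g * g') x = act g (act g' x)

section Covers

variable {G X : Type u} [Group G] [TopologicalSpace X]

/-- A finite open cover of `X`. -/
def IsFOC (𝒰 : Finset (Set X)) : Prop :=
  (∀ U ∈ 𝒰, IsOpen U) ∧ ⋃₀ (𝒰 : Set (Set X)) = Set.univ

/-- A finite partition of `X` into nonempty clopen sets. -/
def IsClopenPartition (𝒰 : Finset (Set X)) : Prop :=
  (∀ U ∈ 𝒰, IsClopen U ∧ U.Nonempty) ∧ ⋃₀ (𝒰 : Set (Set X)) = Set.univ ∧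
    ∀ U ∈ 𝒰, ∀ V ∈ 𝒰, U ≠ V → U ∩ V = ∅

/-- `𝒱` refines `𝒰`: every member of `𝒱` is contained in a member of `𝒰`. -/
def Refines (𝒱 𝒰 : Finset (Set X)) : Prop :=
  ∀ V ∈ 𝒱, ∃ U ∈ 𝒰, V ⊆ U

/-- `{U g}` is a pattern of the `(S,𝒰)`-pseudo-orbit `{x g}`:
all `U g` belong to `𝒰`, and `x (s*g) ∈ U (s*g)` and `Φ_s (x g) ∈ U (s*g)`
for all `g ∈ G`, `s ∈ S`. -/
def IsPseudoOrbitPattern (Φ : DynAction G X) (S : Set G) (𝒰 : Finset (Set X))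
    (x : G → X) (U : G → Set X) : Prop :=
  (∀ g : G, U g ∈ 𝒰) ∧
    ∀ g : G, ∀ s ∈ S, x (s * g) ∈ U (s * g) ∧ Φ.act s (x g) ∈ U (s * g)

/-- `{x g}` is an `(S,𝒰)`-pseudo-orbit. -/
def IsPseudoOrbit (Φ : DynAction G X) (S : Set G) (𝒰 : Finset (Set X)) (x : G → X) : Prop :=
  ∃ U : G → Set X, IsPseudoOrbitPattern Φ S 𝒰 x U

/-- `z` `𝒰`-shadows the family `{x g}`. -/
def Shadows (Φ : DynAction G X) (𝒰 : Finset (Set X)) (z : X) (x : G → X) : Prop :=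
  ∀ g : G, ∃ U ∈ 𝒰, Φ.act g z ∈ U ∧ x g ∈ U

/-- The (topological) `S`-shadowing property. -/
def ShadowingProperty (Φ : DynAction G X) (S : Set G) : Prop :=
  ∀ 𝒰 : Finset (Set X), IsFOC 𝒰 → ∃ 𝒱 : Finset (Set X), IsFOC 𝒱 ∧
    ∀ x : G → X, IsPseudoOrbit Φ S 𝒱 x → ∃ z : X, Shadows Φ 𝒰 z x

/-! ### Equivariant maps, factor maps, conjugacies -/

def IsEquivariant {Y : Type u} [TopologicalSpace Y]
    (ΦX : DynAction G X) (ΦY : DynAction G Y) (f : X → Y) : Prop :=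
  ∀ (g : G) (x : X), f (ΦX.act g x) = ΦY.act g (f x)

/-- `f` is a factor map from `(X,G,ΦX)` onto `(Y,G,ΦY)`. -/
def IsFactorMap {Y : Type u} [TopologicalSpace Y]
    (ΦX : DynAction G X) (ΦY : DynAction G Y) (f : X → Y) : Prop :=
  Continuous f ∧ Function.Surjective f ∧ IsEquivariant ΦX ΦY f

/-- `f` is a conjugacy (bijective factor map). -/
def IsConjugacy {Y : Type u} [TopologicalSpace Y]
    (ΦX : DynAction G X) (ΦY : DynAction G Y) (f : X → Y) : Prop :=
  Continuous f ∧ Function.Bijective f ∧ IsEquivariant ΦX ΦY f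

end Covers

/-! ### Shifts, subshifts, shifts of finite type -/

/-- The shift action on `A^G`: `(σ_g x) h = x (h * g)`. -/
def shift (G A : Type u) [Group G] (g : G) (x : G → A) : G → A :=
  fun h => x (h * g)

/-- The full shift `A^G` (product topology) as a dynamical system. -/
def shiftDyn (G A : Type u) [Group G] [TopologicalSpace A] : DynAction G (G → A) where
  act := shift G A
  continuous_act g := continuous_pi fun h => continuous_apply (h * g)
  act_one x := by funext h; simp [shift]
  act_mul g g' x := by funext h; simp [shift, mul_assoc]

/-- A subshift: a closed shift-invariant subset of the full shift `A^G`. -/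
def IsSubshift {G A : Type u} [Group G] [TopologicalSpace A] (Y : Set (G → A)) : Prop :=
  IsClosed Y ∧ ∀ g : G, ∀ x ∈ Y, shift G A g x ∈ Y

/-- The cylinder set determined by the values of `P` on the finite shape `B`. -/
def cylinder {G A : Type u} (B : Finset G) (P : G → A) : Set (G → A) :=
  {y | ∀ b ∈ B, y b = P b}

/-- The language of `Y ⊆ A^G` over the finite shape `B` (a pattern is recorded by any
function `G → A` with the prescribed values on `B`). -/
def language {G A : Type u} (B : Finset G) (Y : Set (G → A)) : Set (G → A) :=
  {P | (cylinder B P ∩ Y).Nonempty}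

/-- `Y` is a shift of finite type over the finite shape `B`: it is cut out by a family of
forbidden patterns on `B`. -/
def IsSFTOver {G A : Type u} [Group G] (B : Finset G) (Y : Set (G → A)) : Prop :=
  ∃ ℱ : Set (G → A), Y = {x | ∀ g : G, ∀ P ∈ ℱ, shift G A g x ∉ cylinder B P}

/-- The shift action restricted to a subshift. -/
def subshiftDyn {G A : Type u} [Group G] [TopologicalSpace A] (Y : Set (G → A))
    (hY : IsSubshift Y) : DynAction G ↥Y where
  act g x := ⟨shift G A g x.1, hY.2 g x.1 x.2⟩
  continuous_act g := Continuous.subtype_mk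
    ((continuous_pi fun h => continuous_apply (h * g)).comp continuous_subtype_val) _
  act_one x := by apply Subtype.ext; funext h; simp [shift]
  act_mul g g' x := by apply Subtype.ext; funext h; simp [shift, mul_assoc]

/-! ### Hitting time sets and mixing-type properties -/

section Mixing

variable {G X : Type u} [Group G] [TopologicalSpace X]

/-- The hitting time set `N(U,V) = {g ≠ e : U ∩ Φ_{g⁻¹}(V) ≠ ∅}`. -/
def hittingTimes (Φ : DynAction G X) (U V : Set X) : Set G :=
  {g : G | g ≠ 1 ∧ (U ∩ Φ.act g⁻¹ '' V).Nonempty}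

/-- Topological mixing: `G \ N(U,V)` is finite for all nonempty open `U, V`. -/
def IsMixing (Φ : DynAction G X) : Prop :=
  ∀ U V : Set X, IsOpen U → IsOpen V → U.Nonempty → V.Nonempty →
    ((hittingTimes Φ U V)ᶜ : Set G).Finite

/-- Minimality: there is no nonempty proper closed invariant subset. -/
def IsMinimal (Φ : DynAction G X) : Prop :=
  ∀ K : Set X, IsClosed K → (∀ g : G, ∀ x ∈ K, Φ.act g x ∈ K) →
    K = ∅ ∨ K = Set.univ

end Mixing

/-! ### Inverse systems of subshifts -/

/-- An inverse system of dynamical systems whose terms are subshifts over finite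
(discrete) alphabets, with the shift `G`-action. -/
structure SubshiftInvSys (G : Type u) [Group G] (Λ : Type u) [Preorder Λ] where
  A : Λ → Type u
  [topoA : ∀ l, TopologicalSpace (A l)]
  [discA : ∀ l, DiscreteTopology (A l)]
  [finA : ∀ l, Finite (A l)]
  Y : ∀ l : Λ, Set (G → A l)
  subshift : ∀ l : Λ, IsSubshift (Y l)
  bond : ∀ {l m : Λ}, l ≤ m → ↥(Y m) → ↥(Y l)
  bond_cont : ∀ {l m : Λ} (h : l ≤ m), Continuous (bond h)
  bond_refl : ∀ (l : Λ) (x : ↥(Y l)), bond (le_refl l) x = x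
  bond_comp : ∀ {l m n : Λ} (h1 : l ≤ m) (h2 : m ≤ n) (x : ↥(Y n)),
    bond h1 (bond h2 x) = bond (h1.trans h2) x
  bond_equivariant : ∀ {l m : Λ} (h : l ≤ m) (g : G) (x : ↥(Y m)),
    (subshiftDyn (Y l) (subshift l)).act g (bond h x)
      = bond h ((subshiftDyn (Y m) (subshift m)).act g x)

namespace SubshiftInvSys

variable {G Λ : Type u} [Group G] [Preorder Λ]

instance (𝒮 : SubshiftInvSys G Λ) (l : Λ) : TopologicalSpace (𝒮.A l) := 𝒮.topoA l
instance (𝒮 : SubshiftInvSys G Λ) (l : Λ) : DiscreteTopology (𝒮.A l) := 𝒮.discA l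
instance (𝒮 : SubshiftInvSys G Λ) (l : Λ) : Finite (𝒮.A l) := 𝒮.finA l

/-- The `G`-action on the term `Y l` (the restricted shift). -/
def termDyn (𝒮 : SubshiftInvSys G Λ) (l : Λ) : DynAction G ↥(𝒮.Y l) :=
  subshiftDyn (𝒮.Y l) (𝒮.subshift l)

/-- The inverse limit of the system, as a subset of the product. -/
def limitSet (𝒮 : SubshiftInvSys G Λ) : Set (∀ l : Λ, ↥(𝒮.Y l)) :=
  {x | ∀ (l m : Λ) (h : l ≤ m), 𝒮.bond h (x m) = x l}

lemma act_mem_limitSet (𝒮 : SubshiftInvSys G Λ) (g : G) (x : ∀ l : Λ, ↥(𝒮.Y l))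
    (hx : x ∈ 𝒮.limitSet) : (fun l => (𝒮.termDyn l).act g (x l)) ∈ 𝒮.limitSet := by
  intro l m h
  show 𝒮.bond h ((𝒮.termDyn m).act g (x m)) = (𝒮.termDyn l).act g (x l)
  rw [show (𝒮.termDyn m).act g (x m)
        = (subshiftDyn (𝒮.Y m) (𝒮.subshift m)).act g (x m) from rfl,
      ← 𝒮.bond_equivariant h g (x m)]
  show (𝒮.termDyn l).act g (𝒮.bond h (x m)) = _
  rw [hx l m h]

/-- The induced `G`-action `σ*` on the inverse limit. -/
def limitDyn (𝒮 : SubshiftInvSys G Λ) : DynAction G ↥𝒮.limitSet where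
  act g x := ⟨fun l => (𝒮.termDyn l).act g (x.1 l), 𝒮.act_mem_limitSet g x.1 x.2⟩
  continuous_act g := Continuous.subtype_mk
    (continuous_pi fun l => ((𝒮.termDyn l).continuous_act g).comp
      ((continuous_apply l).comp continuous_subtype_val)) _
  act_one x := by
    apply Subtype.ext; funext l
    exact (𝒮.termDyn l).act_one (x.1 l)
  act_mul g g' x := by
    apply Subtype.ext; funext l
    exact (𝒮.termDyn l).act_mul g g' (x.1 l)

/-- The Mittag-Leffler condition. -/
def ML (𝒮 : SubshiftInvSys G Λ) : Prop :=
  ∀ l : Λ, ∃ m : Λ, ∃ h : l ≤ m, ∀ (n : Λ) (h' : m ≤ n),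
    Set.range (𝒮.bond (h.trans h')) = Set.range (𝒮.bond h)

end SubshiftInvSys

/-- An inverse system of subshifts over some directed index set, packaged together
with its (directed, preordered) index. -/
structure SubshiftInvSysPkg (G : Type u) [Group G] where
  Idx : Type u
  [pre : Preorder Idx]
  directed : IsDirected Idx (· ≤ ·)
  sys : SubshiftInvSys G Idx

namespace SubshiftInvSysPkg

variable {G : Type u} [Group G]

instance (P : SubshiftInvSysPkg G) : Preorder P.Idx := P.pre

end SubshiftInvSysPkg

section Balls
variable {G : Type} [Group G]

/-- Ball of radius `n` in the word metric w.r.t. generators `S ∪ S⁻¹`. -/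
def genBall (S : Set G) : ℕ → Set G
  | 0 => {1}
  | n+1 => genBall S n ∪ ⋃ s ∈ S, (((s * ·) '' genBall S n) ∪ ((s⁻¹ * ·) '' genBall S n))

lemma genBall_mono (S : Set G) {m n : ℕ} (h : m ≤ n) : genBall S m ⊆ genBall S n := by
  induction n with
  | zero => simpa [Nat.le_zero.mp h] using subset_rfl
  | succ n ih =>
    rcases Nat.le_succ_iff.mp h with h' | h'
    · exact (ih h').trans (fun x hx => Or.inl hx)
    · subst h'; exact subset_rfl

lemma one_mem_genBall (S : Set G) (n : ℕ) : (1 : G) ∈ genBall S n :=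
  genBall_mono S (Nat.zero_le n) rfl

lemma genBall_finite {S : Set G} (hS : S.Finite) (n : ℕ) : (genBall S n).Finite := by
  induction n with
  | zero => exact finite_singleton 1
  | succ n ih => exact ih.union (Finite.biUnion hS fun s _ => (ih.image _).union (ih.image _))

lemma genBall_mul {S : Set G} {a b : ℕ} {u v : G}
    (hu : u ∈ genBall S a) (hv : v ∈ genBall S b) : u * v ∈ genBall S (a + b) := by
  induction a generalizing u with
  | zero =>
    have : u = 1 := hu
    subst this; simpa using genBall_mono S (Nat.le_add_left b 0) hv
  | succ a ih =>
    rcases hu with hu | hu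
    · exact genBall_mono S (by omega) (ih hu)
    · simp only [mem_iUnion] at hu
      obtain ⟨s, hs, hu⟩ := hu
      have hsucc : a + 1 + b = (a + b) + 1 := by omega
      rw [hsucc]
      rcases hu with ⟨w, hw, rfl⟩ | ⟨w, hw, rfl⟩
      · refine Or.inr ?_
        simp only [mem_iUnion]
        exact ⟨s, hs, Or.inl ⟨w * v, ih hw, by group⟩⟩
      · refine Or.inr ?_
        simp only [mem_iUnion]
        exact ⟨s, hs, Or.inr ⟨w * v, ih hw, by group⟩⟩

lemma genBall_inv {S : Set G} {n : ℕ} {u : G} (hu : u ∈ genBall S n) :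
    u⁻¹ ∈ genBall S n := by
  induction n generalizing u with
  | zero => have : u = 1 := hu; subst this; simpa using one_mem_genBall S 0
  | succ n ih =>
    rcases hu with hu | hu
    · exact genBall_mono S (Nat.le_succ n) (ih hu)
    · simp only [mem_iUnion] at hu
      obtain ⟨s, hs, hu⟩ := hu
      have h1 : ∀ t : G, (t ∈ S ∧ ∃ w ∈ genBall S n, w = t) ∨ True := fun _ => Or.inr trivial
      rcases hu with ⟨w, hw, rfl⟩ | ⟨w, hw, rfl⟩
      · -- (s * w)⁻¹ = w⁻¹ * s⁻¹ ∈ ball n * ball 1 ⊆ ball (n+1)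
        have hs1 : s⁻¹ ∈ genBall S 1 := by
          refine Or.inr ?_
          simp only [mem_iUnion]
          exact ⟨s, hs, Or.inr ⟨1, rfl, by group⟩⟩
        have := genBall_mul (ih hw) hs1
        simpa [mul_inv_rev] using this
      · have hs1 : s ∈ genBall S 1 := by
          refine Or.inr ?_
          simp only [mem_iUnion]
          exact ⟨s, hs, Or.inl ⟨1, rfl, by group⟩⟩
        have := genBall_mul (ih hw) hs1
        simpa [mul_inv_rev] using this

lemma exists_genBall_of_closure {S : Set G} (hgen : Subgroup.closure S = ⊤) (g : G) :
    ∃ n, g ∈ genBall S n := by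
  have hg : g ∈ Subgroup.closure S := by rw [hgen]; trivial
  induction hg using Subgroup.closure_induction with
  | mem s hs =>
    exact ⟨1, Or.inr (by simp only [mem_iUnion]; exact ⟨s, hs, Or.inl ⟨1, rfl, by group⟩⟩)⟩
  | one => exact ⟨0, rfl⟩
  | mul u v _ _ hu hv =>
    obtain ⟨a, ha⟩ := hu; obtain ⟨b, hb⟩ := hv
    exact ⟨a + b, genBall_mul ha hb⟩
  | inv u _ hu =>
    obtain ⟨a, ha⟩ := hu
    exact ⟨a, genBall_inv ha⟩

lemma finite_subset_genBall {S : Set G} (hgen : Subgroup.closure S = ⊤) {K : Set G}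
    (hK : K.Finite) : ∃ n, K ⊆ genBall S n := by
  have : ∀ g : G, ∃ n, g ∈ genBall S n := exists_genBall_of_closure hgen
  choose f hf using this
  rcases hK.exists_finset_coe with ⟨Kf, rfl⟩
  classical
  refine ⟨(Kf.image f).max.getD 0 + 1, fun g hg => ?_⟩
  have : f g ≤ (Kf.image f).max.getD 0 + 1 := by
    have hmem : f g ∈ Kf.image f := Finset.mem_image_of_mem f hg
    have := Finset.le_max hmem
    rcases hmax : (Kf.image f).max with _ | m
    · exact absurd (Finset.image_eq_empty.mp (Finset.max_eq_bot.mp hmax)) (Finset.ne_empty_of_mem hg)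
    · rw [hmax] at this; simp only [hmax, Option.getD_some]
      exact le_trans (by exact_mod_cast (WithBot.coe_le_coe.mp this)) (Nat.le_succ m)
  exact genBall_mono S this (hf g)

end Balls

section Windows
variable {ι A : Type} [TopologicalSpace A] [DiscreteTopology A]

/-- Every open set in a product of discrete spaces contains a cylinder neighborhood. -/
lemma exists_finset_cylinder_subset {O : Set (ι → A)} (hO : IsOpen O) {x : ι → A}
    (hx : x ∈ O) : ∃ D : Finset ι, {y : ι → A | ∀ i ∈ D, y i = x i} ⊆ O := by
  obtain ⟨I, u, hu, hsub⟩ := isOpen_pi_iff.mp hO x hx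
  refine ⟨I, fun y hy => hsub fun i hi => ?_⟩
  rw [hy i hi]
  exact (hu i hi).2

/-- Cylinder neighborhoods inside a subtype of the product. -/
lemma exists_finset_cylinder_subset_subtype {Y : Set (ι → A)} {O : Set ↥Y} (hO : IsOpen O)
    {x : ↥Y} (hx : x ∈ O) :
    ∃ D : Finset ι, ∀ y : ↥Y, (∀ i ∈ D, y.1 i = x.1 i) → y ∈ O := by
  obtain ⟨t, ht, rfl⟩ := isOpen_induced_iff.mp hO
  obtain ⟨D, hD⟩ := exists_finset_cylinder_subset ht hx
  exact ⟨D, fun y hy => hD fun i hi => hy i hi⟩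

/-- Cylinder subsets are open. -/
lemma isOpen_cylinder_subtype (Y : Set (ι → A)) (D : Finset ι) (p : ι → A) :
    IsOpen {y : ↥Y | ∀ i ∈ D, y.1 i = p i} := by
  have : {y : ↥Y | ∀ i ∈ D, y.1 i = p i} = ⋂ i ∈ D, {y : ↥Y | y.1 i = p i} := by
    ext y; simp
  rw [this]
  refine isOpen_biInter_finset fun i _ => ?_
  have hc : Continuous (fun y : ↥Y => y.1 i) := (continuous_apply i).comp continuous_subtype_val
  exact hc.isOpen_preimage {p i} (isOpen_discrete _)

/-- Uniform window: a continuous map from a compact subspace of a product of discrete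
spaces into a discrete space only depends on finitely many coordinates. -/
lemma exists_uniform_window {Y : Set (ι → A)} [CompactSpace ↥Y] {Z : Type*}
    [TopologicalSpace Z] [DiscreteTopology Z] {ψ : ↥Y → Z} (hψ : Continuous ψ) :
    ∃ D : Finset ι, ∀ u v : ↥Y, (∀ i ∈ D, u.1 i = v.1 i) → ψ u = ψ v := by
  -- for each u, an open cylinder on which ψ is constant
  have key : ∀ u : ↥Y, ∃ D : Finset ι, ∀ y : ↥Y, (∀ i ∈ D, y.1 i = u.1 i) → ψ y = ψ u := by
    intro u
    have hop : IsOpen {y : ↥Y | ψ y = ψ u} := hψ.isOpen_preimage _ (isOpen_discrete {ψ u})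
    exact exists_finset_cylinder_subset_subtype hop rfl
  choose D hD using key
  have hcover : (Set.univ : Set ↥Y) ⊆ ⋃ u : ↥Y, {y : ↥Y | ∀ i ∈ D u, y.1 i = u.1 i} := by
    intro y _
    exact mem_iUnion.mpr ⟨y, fun i _ => rfl⟩
  obtain ⟨T, hT⟩ := isCompact_univ.elim_finite_subcover _
    (fun u => isOpen_cylinder_subtype Y (D u) u.1) hcover
  classical
  refine ⟨T.biUnion (fun u => D u), fun u v huv => ?_⟩
  obtain ⟨w, hw, hu⟩ := mem_iUnion₂.mp (hT (mem_univ u))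
  have huw : ∀ i ∈ D w, u.1 i = w.1 i := hu
  have hvw : ∀ i ∈ D w, v.1 i = w.1 i := by
    intro i hi
    rw [← huv i (Finset.mem_biUnion.mpr ⟨w, hw, hi⟩)]
    exact huw i hi
  rw [hD w u huw, hD w v hvw]

end Windows

section Partitions
variable {X : Type} [TopologicalSpace X]

lemma IsClopenPartition.isFOC {l : Finset (Set X)} (hl : IsClopenPartition l) : IsFOC l :=
  ⟨fun U hU => (hl.1 U hU).1.2, hl.2.1⟩

lemma IsClopenPartition.eq_of_mem {l : Finset (Set X)} (hl : IsClopenPartition l)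
    {U V : Set X} (hU : U ∈ l) (hV : V ∈ l) {x : X} (hxU : x ∈ U) (hxV : x ∈ V) : U = V := by
  by_contra hne
  have := hl.2.2 U hU V hV hne
  exact absurd (mem_inter hxU hxV) (by rw [this]; exact notMem_empty x)

lemma exists_mem_of_partition {l : Finset (Set X)} (hl : IsClopenPartition l) (x : X) :
    ∃ U, U ∈ l ∧ x ∈ U := by
  have : x ∈ ⋃₀ (l : Set (Set X)) := by rw [hl.2.1]; trivial
  obtain ⟨U, hU, hxU⟩ := this
  exact ⟨U, hU, hxU⟩

/-- The member of a clopen partition containing a given point. -/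
noncomputable def memElem {l : Finset (Set X)} (hl : IsClopenPartition l) (x : X) :
    {U : Set X // U ∈ l} :=
  ⟨(exists_mem_of_partition hl x).choose, (exists_mem_of_partition hl x).choose_spec.1⟩

lemma mem_memElem {l : Finset (Set X)} (hl : IsClopenPartition l) (x : X) :
    x ∈ (memElem hl x : Set X) := (exists_mem_of_partition hl x).choose_spec.2

lemma memElem_eq {l : Finset (Set X)} (hl : IsClopenPartition l) {x : X} {U : Set X}
    (hU : U ∈ l) (hx : x ∈ U) : (memElem hl x : Set X) = U :=
  hl.eq_of_mem (memElem hl x).2 hU (mem_memElem hl x) hx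

lemma memElem_eq_iff {l : Finset (Set X)} (hl : IsClopenPartition l) (z : X)
    (U : {V : Set X // V ∈ l}) : memElem hl z = U ↔ z ∈ (U : Set X) := by
  constructor
  · intro h; rw [← h]; exact mem_memElem hl z
  · intro h; exact Subtype.ext (memElem_eq hl U.2 h)

/-- Every finite open cover of a compact totally disconnected Hausdorff space is refined
by a clopen partition. -/
lemma exists_clopenPartition_refines [CompactSpace X] [T2Space X] [TotallyDisconnectedSpace X]
    {𝒰 : Finset (Set X)} (h𝒰 : IsFOC 𝒰) :
    ∃ p : Finset (Set X), IsClopenPartition p ∧ Refines p 𝒰 := by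
  classical
  -- for each x, a clopen set containing x inside some member of 𝒰
  have key : ∀ x : X, ∃ C : Set X, IsClopen C ∧ x ∈ C ∧ ∃ U ∈ 𝒰, C ⊆ U := by
    intro x
    have : x ∈ ⋃₀ (𝒰 : Set (Set X)) := by rw [h𝒰.2]; trivial
    obtain ⟨U, hU, hxU⟩ := this
    obtain ⟨C, hC, hxC, hCU⟩ := compact_exists_isClopen_in_isOpen (h𝒰.1 U hU) hxU
    exact ⟨C, hC, hxC, U, hU, hCU⟩
  choose C hC hxC U hU hCU using key
  obtain ⟨T, hT⟩ := isCompact_univ.elim_finite_subcover C (fun x => (hC x).2)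
    (fun x _ => mem_iUnion.mpr ⟨x, hxC x⟩)
  -- cells of the Boolean combination
  let cell : (T → Bool) → Set X := fun f => ⋂ t : T, (if f t then C t.1 else (C t.1)ᶜ)
  have hcellClopen : ∀ f, IsClopen (cell f) := by
    intro f
    refine isClopen_iInter_of_finite fun t => ?_
    by_cases h : f t <;> simp [h, hC t.1, (hC t.1).compl]
  have hcell_disj : ∀ f g, cell f ≠ cell g → cell f ∩ cell g = ∅ := by
    intro f g hne
    rw [Set.eq_empty_iff_forall_notMem]
    rintro x ⟨hxf, hxg⟩
    refine hne ?_
    suffices hfg : f = g by rw [hfg]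
    funext t
    have h1 := mem_iInter.mp hxf t
    have h2 := mem_iInter.mp hxg t
    by_cases hf : f t <;> by_cases hg : g t <;> simp [hf, hg] at h1 h2 ⊢
    · exact h2 h1
    · exact h1 h2
  have hcell_sub : ∀ f, (cell f).Nonempty → ∃ U ∈ 𝒰, cell f ⊆ U := by
    rintro f ⟨x, hx⟩
    obtain ⟨t, ht, hxt⟩ := mem_iUnion₂.mp (hT (mem_univ x))
    have hft : f ⟨t, ht⟩ = true := by
      by_contra hft
      have := mem_iInter.mp hx ⟨t, ht⟩
      simp only [Bool.not_eq_true] at hft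
      simp [hft] at this
      exact this hxt
    refine ⟨U t, hU t, ?_⟩
    intro y hy
    have := mem_iInter.mp hy ⟨t, ht⟩
    simp only [hft, if_true] at this
    exact hCU t this
  have hcell_cover : ∀ x : X, ∃ f, x ∈ cell f := by
    intro x
    refine ⟨fun t => decide (x ∈ C t.1), mem_iInter.mpr fun t => ?_⟩
    by_cases h : x ∈ C t.1 <;> simp [h]
  refine ⟨(Finset.univ : Finset (T → Bool)).image cell |>.filter (fun c => c.Nonempty),
    ⟨?_, ?_, ?_⟩, ?_⟩
  · intro U hU
    simp only [Finset.mem_filter, Finset.mem_image] at hU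
    obtain ⟨⟨f, _, rfl⟩, hne⟩ := hU
    exact ⟨hcellClopen f, hne⟩
  · apply Set.eq_univ_of_forall
    intro x
    obtain ⟨f, hf⟩ := hcell_cover x
    refine ⟨cell f, ?_, hf⟩
    simp only [Finset.coe_filter, Finset.mem_image, mem_setOf_eq]
    exact ⟨⟨f, Finset.mem_univ f, rfl⟩, ⟨x, hf⟩⟩
  · intro U hU V hV hne
    simp only [Finset.mem_filter, Finset.mem_image] at hU hV
    obtain ⟨⟨f, _, rfl⟩, _⟩ := hU
    obtain ⟨⟨g, _, rfl⟩, _⟩ := hV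
    exact hcell_disj f g hne
  · intro V hV
    simp only [Finset.mem_filter, Finset.mem_image] at hV
    obtain ⟨⟨f, _, rfl⟩, hne⟩ := hV
    exact hcell_sub f hne

end Partitions

section ForwardIdx
variable {X : Type} [TopologicalSpace X]

/-- Index type: clopen partitions of `X`, ordered by refinement. -/
def PartIdx (X : Type) [TopologicalSpace X] : Type := {l : Finset (Set X) // IsClopenPartition l}

instance : Preorder (PartIdx X) where
  le l m := Refines m.1 l.1
  le_refl l V hV := ⟨V, hV, subset_rfl⟩
  le_trans l m n h1 h2 V hV := by
    obtain ⟨W, hW, hVW⟩ := h2 V hV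
    obtain ⟨U, hU, hWU⟩ := h1 W hW
    exact ⟨U, hU, hVW.trans hWU⟩

lemma PartIdx.le_def {l m : PartIdx X} : l ≤ m ↔ Refines m.1 l.1 := Iff.rfl

instance PartIdx.nonempty : Nonempty (PartIdx X) := by
  classical
  rcases isEmpty_or_nonempty X with hX | hX
  · refine ⟨⟨∅, ?_, ?_, ?_⟩⟩
    · intro U hU; simp at hU
    · simp [Set.eq_empty_of_isEmpty (Set.univ : Set X)]
    · intro U hU; simp at hU
  · refine ⟨⟨{Set.univ}, ?_, ?_, ?_⟩⟩
    · intro U hU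
      simp only [Finset.mem_singleton] at hU
      subst hU
      exact ⟨isClopen_univ, Set.univ_nonempty⟩
    · simp
    · intro U hU V hV hne
      simp only [Finset.mem_singleton] at hU hV
      subst hU; subst hV; exact absurd rfl hne

instance PartIdx.directed : IsDirected (PartIdx X) (· ≤ ·) := by
  classical
  refine ⟨fun l m => ?_⟩
  refine ⟨⟨((l.1 ×ˢ m.1).image (fun p => p.1 ∩ p.2)).filter (fun c => c.Nonempty),
    ?_, ?_, ?_⟩, ?_, ?_⟩
  · intro W hW
    simp only [Finset.mem_filter, Finset.mem_image, Finset.mem_product] at hW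
    obtain ⟨⟨⟨U, V⟩, ⟨hU, hV⟩, rfl⟩, hne⟩ := hW
    exact ⟨((l.2.1 U hU).1.inter (m.2.1 V hV).1), hne⟩
  · apply Set.eq_univ_of_forall
    intro x
    obtain ⟨U, hU, hxU⟩ := exists_mem_of_partition l.2 x
    obtain ⟨V, hV, hxV⟩ := exists_mem_of_partition m.2 x
    refine ⟨U ∩ V, ?_, hxU, hxV⟩
    simp only [Finset.coe_filter, Finset.mem_image, Finset.mem_product, Set.mem_setOf_eq]
    exact ⟨⟨(U, V), ⟨hU, hV⟩, rfl⟩, ⟨x, hxU, hxV⟩⟩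
  · intro W hW W' hW' hne
    simp only [Finset.mem_filter, Finset.mem_image, Finset.mem_product] at hW hW'
    obtain ⟨⟨⟨U, V⟩, ⟨hU, hV⟩, rfl⟩, _⟩ := hW
    obtain ⟨⟨⟨U', V'⟩, ⟨hU', hV'⟩, rfl⟩, _⟩ := hW'
    rw [Set.eq_empty_iff_forall_notMem]
    rintro x ⟨⟨hxU, hxV⟩, ⟨hxU', hxV'⟩⟩
    refine hne ?_
    rw [l.2.eq_of_mem hU hU' hxU hxU', m.2.eq_of_mem hV hV' hxV hxV']
  · intro W hW
    simp only [Finset.mem_filter, Finset.mem_image, Finset.mem_product] at hW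
    obtain ⟨⟨⟨U, V⟩, ⟨hU, hV⟩, rfl⟩, _⟩ := hW
    exact ⟨U, hU, Set.inter_subset_left⟩
  · intro W hW
    simp only [Finset.mem_filter, Finset.mem_image, Finset.mem_product] at hW
    obtain ⟨⟨⟨U, V⟩, ⟨hU, hV⟩, rfl⟩, _⟩ := hW
    exact ⟨V, hV, Set.inter_subset_right⟩

end ForwardIdx

section ForwardSys
variable {G X : Type} [Group G] [TopologicalSpace X]

/-- Alphabet at level `l`: the members of the partition. -/
def pA (l : PartIdx X) : Type := {U : Set X // U ∈ l.1}

/-- The underlying set of a letter. -/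
def pAset {l : PartIdx X} (U : pA l) : Set X := U.1

lemma pAset_mem {l : PartIdx X} (U : pA l) : pAset U ∈ l.1 := U.2

noncomputable instance (l : PartIdx X) : Fintype (pA l) := by
  unfold pA; exact FinsetCoe.fintype l.1

instance (l : PartIdx X) : TopologicalSpace (pA l) := ⊥
instance (l : PartIdx X) : DiscreteTopology (pA l) := ⟨rfl⟩
instance (l : PartIdx X) : Finite (pA l) := Finite.of_fintype _

lemma pA_ext {l : PartIdx X} {U V : pA l} (h : pAset U = pAset V) : U = V :=
  Subtype.ext h

/-- The local consistency condition. -/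
def pCond (Φ : DynAction G X) (S : Finset G) {l : PartIdx X} (c : pA l) (d : G → pA l) : Prop :=
  (pAset c ∩ ⋂ s ∈ S, Φ.act s ⁻¹' pAset (d s)).Nonempty

/-- The SFT of locally consistent patterns at level `l`. -/
def pY (Φ : DynAction G X) (S : Finset G) (l : PartIdx X) : Set (G → pA l) :=
  {U | ∀ g : G, pCond Φ S (U g) (fun s => U (s * g))}

lemma pY_subshift (Φ : DynAction G X) (S : Finset G) (l : PartIdx X) :
    IsSubshift (pY Φ S l) := by
  constructor
  · -- closed
    have hrw : pY Φ S l = ⋂ g : G,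
        (fun U : G → pA l => (U g, fun s : G => U (s * g))) ⁻¹'
          {p : pA l × (G → pA l) | pCond Φ S p.1 p.2} := by
      ext U
      simp only [pY, Set.mem_iInter, Set.mem_preimage, Set.mem_setOf_eq]
    rw [hrw]
    refine isClosed_iInter fun g => ?_
    refine IsClosed.preimage ?_ ?_
    · exact Continuous.prodMk (continuous_apply g)
        (continuous_pi fun s => continuous_apply (s * g))
    · -- the set only depends on the coordinates in S; closedness in the product
      have : {p : pA l × (G → pA l) | pCond Φ S p.1 p.2} =
          (fun p : pA l × (G → pA l) => (p.1, fun s : {s // s ∈ S} => p.2 s.1)) ⁻¹'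
            {q : pA l × ({s // s ∈ S} → pA l) |
              (pAset q.1 ∩ ⋂ s : {s // s ∈ S}, Φ.act s.1 ⁻¹' pAset (q.2 s)).Nonempty} := by
        ext p
        simp only [Set.mem_setOf_eq, Set.mem_preimage, pCond]
        constructor <;> intro h <;> refine h.mono (Set.inter_subset_inter subset_rfl ?_) <;>
          intro x hx <;> simp only [Set.mem_iInter] at hx ⊢
        · rintro ⟨s, hs⟩; exact hx s hs
        · intro s hs; exact hx ⟨s, hs⟩
      rw [this]
      refine IsClosed.preimage ?_ (isClosed_discrete _)
      exact Continuous.prodMk continuous_fst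
        (continuous_pi fun s => (continuous_apply s.1).comp continuous_snd)
  · -- shift invariant
    intro h U hU g
    have key := hU (g * h)
    simp only [pCond, shift] at key ⊢
    convert key using 4 with s
    rw [mul_assoc]

lemma pY_SFT [DecidableEq G] (Φ : DynAction G X) (S : Finset G) (l : PartIdx X) :
    IsSFTOver (insert (1:G) S) (pY Φ S l) := by
  refine ⟨{P : G → pA l | ¬ pCond Φ S (P 1) P}, ?_⟩
  ext x
  simp only [pY, Set.mem_setOf_eq]
  constructor
  · intro hx g P hP hcyl
    refine hP ?_
    have h1 : P 1 = x g := by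
      have := hcyl 1 (Finset.mem_insert_self 1 S)
      simp only [shift, one_mul] at this
      exact this.symm
    have hs : ∀ s ∈ S, P s = x (s * g) := by
      intro s hs
      have := hcyl s (Finset.mem_insert_of_mem hs)
      simp only [shift] at this
      exact this.symm
    have hg := hx g
    simp only [pCond] at hg ⊢
    rw [h1]
    refine hg.mono (Set.inter_subset_inter subset_rfl ?_)
    refine Set.iInter₂_mono fun s hsS => ?_
    rw [hs s hsS]
  · intro hx g
    by_contra hcon
    refine hx g (shift G (pA l) g x) ?_ (fun b _ => rfl)
    simp only [Set.mem_setOf_eq, shift, one_mul]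
    intro hne
    exact hcon hne

end ForwardSys

section ForwardBond
variable {G X : Type} [Group G] [TopologicalSpace X]

lemma Refines.trans' {𝒲 𝒱 𝒰 : Finset (Set X)} (h1 : Refines 𝒲 𝒱) (h2 : Refines 𝒱 𝒰) :
    Refines 𝒲 𝒰 := by
  intro W hW
  obtain ⟨V, hV, hWV⟩ := h1 W hW
  obtain ⟨U, hU, hVU⟩ := h2 V hV
  exact ⟨U, hU, hWV.trans hVU⟩

/-- Bonding on letters: the member of the coarser partition containing a given member. -/
noncomputable def bondEl {l m : PartIdx X} (h : l ≤ m) (V : pA m) : pA l :=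
  ⟨((PartIdx.le_def.mp h) (pAset V) V.2).choose,
    ((PartIdx.le_def.mp h) (pAset V) V.2).choose_spec.1⟩

lemma bondEl_subset {l m : PartIdx X} (h : l ≤ m) (V : pA m) :
    pAset V ⊆ pAset (bondEl h V) :=
  ((PartIdx.le_def.mp h) (pAset V) V.2).choose_spec.2

lemma bondEl_eq {l m : PartIdx X} (h : l ≤ m) (V : pA m) {U : Set X} (hU : U ∈ l.1)
    (hsub : pAset V ⊆ U) : pAset (bondEl h V) = U := by
  obtain ⟨x, hx⟩ := (m.2.1 _ (pAset_mem V)).2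
  exact l.2.eq_of_mem (bondEl h V).2 hU (bondEl_subset h V hx) (hsub hx)

lemma pCond_mono (Φ : DynAction G X) (S : Finset G) {l m : PartIdx X}
    {c : pA m} {d : G → pA m} {c' : pA l} {d' : G → pA l}
    (hc : pAset c ⊆ pAset c') (hd : ∀ s ∈ S, pAset (d s) ⊆ pAset (d' s))
    (h : pCond Φ S c d) : pCond Φ S c' d' := by
  refine h.mono (Set.inter_subset_inter hc ?_)
  exact Set.iInter₂_mono fun s hs => Set.preimage_mono (hd s hs)

/-- Bonding map on subshifts. -/
noncomputable def bondMap (Φ : DynAction G X) (S : Finset G) {l m : PartIdx X} (h : l ≤ m)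
    (x : ↥(pY Φ S m)) : ↥(pY Φ S l) :=
  ⟨fun g => bondEl h (x.1 g), fun g =>
    pCond_mono Φ S (bondEl_subset h (x.1 g)) (fun s _ => bondEl_subset h (x.1 (s * g)))
      (x.2 g)⟩

lemma bondMap_cont (Φ : DynAction G X) (S : Finset G) {l m : PartIdx X} (h : l ≤ m) :
    Continuous (bondMap Φ S h) := by
  refine Continuous.subtype_mk (continuous_pi fun g => ?_) _
  have c1 : Continuous (fun x : ↥(pY Φ S m) => x.1 g) :=
    (continuous_apply g).comp continuous_subtype_val
  exact (continuous_of_discreteTopology (f := bondEl (l := l) (m := m) h)).comp c1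

lemma bondMap_refl (Φ : DynAction G X) (S : Finset G) (l : PartIdx X) (x : ↥(pY Φ S l)) :
    bondMap Φ S (le_refl l) x = x := by
  refine Subtype.ext (funext fun g => pA_ext ?_)
  exact bondEl_eq (le_refl l) (x.1 g) (pAset_mem (x.1 g)) subset_rfl

lemma bondMap_comp (Φ : DynAction G X) (S : Finset G) {l m n : PartIdx X}
    (h1 : l ≤ m) (h2 : m ≤ n) (x : ↥(pY Φ S n)) :
    bondMap Φ S h1 (bondMap Φ S h2 x) = bondMap Φ S (h1.trans h2) x := by
  refine Subtype.ext (funext fun g => pA_ext ?_)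
  obtain ⟨p, hp⟩ := (n.2.1 _ (pAset_mem (x.1 g))).2
  have hm1 : p ∈ pAset (bondEl h1 (bondEl h2 (x.1 g))) :=
    bondEl_subset h1 _ (bondEl_subset h2 _ hp)
  have hm2 : p ∈ pAset (bondEl (h1.trans h2) (x.1 g)) := bondEl_subset _ _ hp
  exact l.2.eq_of_mem (pAset_mem _) (pAset_mem _) hm1 hm2

lemma bondMap_equivariant (Φ : DynAction G X) (S : Finset G) {l m : PartIdx X} (h : l ≤ m)
    (g : G) (x : ↥(pY Φ S m)) :
    (subshiftDyn (pY Φ S l) (pY_subshift Φ S l)).act g (bondMap Φ S h x)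
      = bondMap Φ S h ((subshiftDyn (pY Φ S m) (pY_subshift Φ S m)).act g x) := by
  refine Subtype.ext (funext fun k => ?_)
  rfl

/-- The inverse system of SFTs built from clopen partitions. -/
noncomputable def fwdSys (Φ : DynAction G X) (S : Finset G) :
    SubshiftInvSys G (PartIdx X) where
  A := pA
  Y := pY Φ S
  subshift := pY_subshift Φ S
  bond h := bondMap Φ S h
  bond_cont h := bondMap_cont Φ S h
  bond_refl := bondMap_refl Φ S
  bond_comp := bondMap_comp Φ S
  bond_equivariant := bondMap_equivariant Φ S

end ForwardBond

section ForwardMap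
variable {G X : Type} [Group G] [TopologicalSpace X]

/-- The itinerary of a point at level `l`. -/
noncomputable def fwdPt (Φ : DynAction G X) (S : Finset G) (l : PartIdx X) (x : X) :
    ↥(pY Φ S l) := by
  refine ⟨fun g => (memElem l.2 (Φ.act g x) : pA l), fun g => ?_⟩
  refine ⟨Φ.act g x, mem_memElem l.2 (Φ.act g x), ?_⟩
  simp only [Set.mem_iInter, Set.mem_preimage]
  intro s _
  have : Φ.act s (Φ.act g x) = Φ.act (s * g) x := (Φ.act_mul s g x).symm
  rw [this]
  exact mem_memElem l.2 (Φ.act (s * g) x)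

lemma fwdPt_coord (Φ : DynAction G X) (S : Finset G) (l : PartIdx X) (x : X) (g : G) :
    pAset ((fwdPt Φ S l x).1 g) = (memElem l.2 (Φ.act g x) : Set X) := rfl

lemma mem_fwdPt (Φ : DynAction G X) (S : Finset G) (l : PartIdx X) (x : X) (g : G) :
    Φ.act g x ∈ pAset ((fwdPt Φ S l x).1 g) := mem_memElem l.2 (Φ.act g x)

lemma fwdPt_eq_iff (Φ : DynAction G X) (S : Finset G) (l : PartIdx X) (x : X) (g : G)
    (U : pA l) : (fwdPt Φ S l x).1 g = U ↔ Φ.act g x ∈ pAset U := by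
  constructor
  · intro h; rw [← h]; exact mem_fwdPt Φ S l x g
  · intro h
    refine pA_ext ?_
    rw [fwdPt_coord]
    exact memElem_eq l.2 (pAset_mem U) h

lemma fwdPt_cont (Φ : DynAction G X) (S : Finset G) (l : PartIdx X) :
    Continuous (fwdPt Φ S l) := by
  refine Continuous.subtype_mk (continuous_pi fun g => ?_) _
  apply continuous_discrete_rng.mpr
  intro U
  have heq : ((fun a => (memElem l.2 (Φ.act g a) : pA l)) ⁻¹' {U}) = Φ.act g ⁻¹' pAset U := by
    ext x
    simp only [Set.mem_preimage, Set.mem_singleton_iff]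
    exact memElem_eq_iff l.2 (Φ.act g x) U
  show IsOpen ((fun a => (memElem l.2 (Φ.act g a) : pA l)) ⁻¹' {U})
  rw [heq]
  exact ((l.2.1 _ (pAset_mem U)).1.2).preimage (Φ.continuous_act g)

lemma fwdPt_bond (Φ : DynAction G X) (S : Finset G) {l m : PartIdx X} (h : l ≤ m) (x : X) :
    bondMap Φ S h (fwdPt Φ S m x) = fwdPt Φ S l x := by
  refine Subtype.ext (funext fun g => ?_)
  refine ((fwdPt_eq_iff Φ S l x g _).mpr ?_).symm
  exact bondEl_subset h _ (mem_fwdPt Φ S m x g)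

/-- The conjugacy onto the inverse limit. -/
noncomputable def fwdF (Φ : DynAction G X) (S : Finset G) (x : X) :
    ↥(fwdSys Φ S).limitSet :=
  ⟨fun l => fwdPt Φ S l x, fun l m h => fwdPt_bond Φ S h x⟩

lemma fwdF_cont (Φ : DynAction G X) (S : Finset G) : Continuous (fwdF Φ S) := by
  refine Continuous.subtype_mk (continuous_pi fun l => ?_) _
  exact fwdPt_cont Φ S l

lemma fwdF_equivariant (Φ : DynAction G X) (S : Finset G) :
    IsEquivariant Φ (fwdSys Φ S).limitDyn (fwdF Φ S) := by
  intro g x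
  refine Subtype.ext (funext fun l => Subtype.ext (funext fun h => ?_))
  show ((fwdPt Φ S l (Φ.act g x)).1 h : pA l) = (fwdPt Φ S l x).1 (h * g)
  refine (fwdPt_eq_iff Φ S l (Φ.act g x) h _).mpr ?_
  have : Φ.act h (Φ.act g x) = Φ.act (h * g) x := (Φ.act_mul h g x).symm
  rw [this]
  exact mem_fwdPt Φ S l x (h * g)

lemma fwdF_injective [CompactSpace X] [T2Space X] [TotallyDisconnectedSpace X]
    (Φ : DynAction G X) (S : Finset G) : Function.Injective (fwdF Φ S) := by
  classical
  intro x y hxy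
  by_contra hne
  have hxy' : x ∈ ({y}ᶜ : Set X) := by simpa using hne
  obtain ⟨C, hC, hxC, hCU⟩ := compact_exists_isClopen_in_isOpen isOpen_compl_singleton hxy'
  have hyC : y ∈ Cᶜ := fun h => hCU h rfl
  have hpart : IsClopenPartition ({C, Cᶜ} : Finset (Set X)) := by
    refine ⟨?_, ?_, ?_⟩
    · intro U hU
      rcases Finset.mem_insert.mp hU with rfl | hU
      · exact ⟨hC, ⟨x, hxC⟩⟩
      · rw [Finset.mem_singleton.mp hU]
        exact ⟨hC.compl, ⟨y, hyC⟩⟩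
    · apply Set.eq_univ_of_forall
      intro z
      by_cases hz : z ∈ C
      · exact ⟨C, by simp, hz⟩
      · exact ⟨Cᶜ, by simp, hz⟩
    · intro U hU V hV hUV
      rcases Finset.mem_insert.mp hU with rfl | hU <;>
        rcases Finset.mem_insert.mp hV with rfl | hV
      · exact absurd rfl hUV
      · rw [Finset.mem_singleton.mp hV]
        simp
      · rw [Finset.mem_singleton.mp hU]
        simp
      · rw [Finset.mem_singleton.mp hU, Finset.mem_singleton.mp hV] at hUV
        exact absurd rfl hUV
  let l : PartIdx X := ⟨{C, Cᶜ}, hpart⟩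
  have hco : (fwdPt Φ S l x).1 1 = (fwdPt Φ S l y).1 1 := by
    have := congrArg (fun w : ↥(fwdSys Φ S).limitSet => (w.1 l).1 1) hxy
    exact this
  have hCl : C ∈ l.1 := Finset.mem_insert_self _ _
  have hCcl : Cᶜ ∈ l.1 := Finset.mem_insert_of_mem (Finset.mem_singleton_self _)
  have e1 : pAset ((fwdPt Φ S l x).1 1) = C := by
    rw [fwdPt_coord]
    exact memElem_eq l.2 hCl (by rw [Φ.act_one]; exact hxC)
  have e2 : pAset ((fwdPt Φ S l y).1 1) = Cᶜ := by
    rw [fwdPt_coord]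
    exact memElem_eq l.2 hCcl (by rw [Φ.act_one]; exact hyC)
  have hCC : C = Cᶜ := e1.symm.trans (by rw [hco]; exact e2)
  have hx2 : x ∈ Cᶜ := by rw [← hCC]; exact hxC
  exact hx2 hxC

end ForwardMap

section ForwardShadow
variable {G X : Type} [Group G] [TopologicalSpace X]

/-- Core lemma: every pattern at a fine level is, after bonding down, the itinerary of an
actual point, thanks to shadowing. -/
lemma exists_shadow_of_pattern (Φ : DynAction G X) (S : Finset G) {l n : PartIdx X}
    (h : l ≤ n) {𝒱 : Finset (Set X)} (href : Refines n.1 𝒱)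
    (hV : ∀ x : G → X, IsPseudoOrbit Φ (S : Set G) 𝒱 x → ∃ z, Shadows Φ l.1 z x)
    (u : ↥(pY Φ S n)) : ∃ z : X, fwdPt Φ S l z = bondMap Φ S h u := by
  have hpt : ∀ g : G, ∃ p : X, p ∈ pAset (u.1 g) ∧
      ∀ s ∈ S, Φ.act s p ∈ pAset (u.1 (s * g)) := by
    intro g
    obtain ⟨p, hp1, hp2⟩ := u.2 g
    refine ⟨p, hp1, fun s hs => ?_⟩
    simp only [Set.mem_iInter, Set.mem_preimage] at hp2
    exact hp2 s hs
  choose y hy1 hy2 using hpt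
  have hpo : IsPseudoOrbit Φ (S : Set G) 𝒱 y := by
    have hW : ∀ g : G, ∃ W, W ∈ 𝒱 ∧ pAset (u.1 g) ⊆ W := by
      intro g
      obtain ⟨W, hW1, hW2⟩ := href _ (pAset_mem (u.1 g))
      exact ⟨W, hW1, hW2⟩
    choose W hW1 hW2 using hW
    refine ⟨W, fun g => hW1 g, fun g s hs => ?_⟩
    have hs' : s ∈ S := hs
    exact ⟨hW2 (s*g) (hy1 (s*g)), hW2 (s*g) (hy2 g s hs')⟩
  obtain ⟨z, hz⟩ := hV y hpo
  refine ⟨z, Subtype.ext (funext fun g => ?_)⟩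
  refine ((fwdPt_eq_iff Φ S l z g _).mpr ?_)
  obtain ⟨U', hU', hzU', hyU'⟩ := hz g
  have hEq : pAset (bondEl h (u.1 g)) = U' :=
    l.2.eq_of_mem (pAset_mem _) hU' (bondEl_subset h _ (hy1 g)) hyU'
  show Φ.act g z ∈ pAset (bondEl h (u.1 g))
  rw [hEq]
  exact hzU'

variable [CompactSpace X] [T2Space X] [TotallyDisconnectedSpace X]

lemma range_bond_eq_range_fwdPt (Φ : DynAction G X) (S : Finset G) {l n : PartIdx X}
    (h : l ≤ n) {𝒱 : Finset (Set X)} (href : Refines n.1 𝒱)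
    (hV : ∀ x : G → X, IsPseudoOrbit Φ (S : Set G) 𝒱 x → ∃ z, Shadows Φ l.1 z x) :
    Set.range (bondMap Φ S h) = Set.range (fwdPt Φ S l) := by
  apply Set.eq_of_subset_of_subset
  · rintro _ ⟨u, rfl⟩
    obtain ⟨z, hz⟩ := exists_shadow_of_pattern Φ S h href hV u
    exact ⟨z, hz⟩
  · rintro _ ⟨x, rfl⟩
    exact ⟨fwdPt Φ S n x, fwdPt_bond Φ S h x⟩

lemma fwdSys_ML (Φ : DynAction G X) (S : Finset G)
    (hsh : ShadowingProperty Φ (S : Set G)) : (fwdSys Φ S).ML := by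
  intro l
  obtain ⟨𝒱, h𝒱FOC, hV⟩ := hsh l.1 l.2.isFOC
  obtain ⟨p, hp, hpref⟩ := exists_clopenPartition_refines h𝒱FOC
  obtain ⟨m, hlm, hpm⟩ := exists_ge_ge l (⟨p, hp⟩ : PartIdx X)
  refine ⟨m, hlm, fun n h' => ?_⟩
  have hrefm : Refines m.1 𝒱 := Refines.trans' hpm hpref
  have hrefn : Refines n.1 𝒱 := Refines.trans' (hpm.trans h') hpref
  show Set.range (bondMap Φ S (hlm.trans h')) = Set.range (bondMap Φ S hlm)
  rw [range_bond_eq_range_fwdPt Φ S (hlm.trans h') hrefn hV,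
    range_bond_eq_range_fwdPt Φ S hlm hrefm hV]

lemma fwdF_surjective (Φ : DynAction G X) (S : Finset G)
    (hsh : ShadowingProperty Φ (S : Set G)) : Function.Surjective (fwdF Φ S) := by
  intro w
  let C : PartIdx X → Set X := fun l => {z | fwdPt Φ S l z = w.1 l}
  have hCcl : ∀ l, IsClosed (C l) := fun l => isClosed_eq (fwdPt_cont Φ S l) continuous_const
  have hne : ∀ l, (C l).Nonempty := by
    intro l
    obtain ⟨𝒱, h𝒱FOC, hV⟩ := hsh l.1 l.2.isFOC
    obtain ⟨p, hp, hpref⟩ := exists_clopenPartition_refines h𝒱FOC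
    obtain ⟨n, hln, hpn⟩ := exists_ge_ge l (⟨p, hp⟩ : PartIdx X)
    have hrefn : Refines n.1 𝒱 := Refines.trans' hpn hpref
    obtain ⟨z, hz⟩ := exists_shadow_of_pattern Φ S hln hrefn hV (w.1 n)
    refine ⟨z, ?_⟩
    show fwdPt Φ S l z = w.1 l
    rw [hz]
    exact w.2 l n hln
  have hmono : ∀ l m : PartIdx X, ∀ h : l ≤ m, C m ⊆ C l := by
    intro l m h z hz
    have hz' : fwdPt Φ S m z = w.1 m := hz
    show fwdPt Φ S l z = w.1 l
    rw [← fwdPt_bond Φ S h z, hz']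
    exact w.2 l m h
  have hinter : (⋂ l, C l).Nonempty := by
    by_contra hcon
    rw [Set.not_nonempty_iff_eq_empty] at hcon
    obtain ⟨T, hT⟩ := isCompact_univ.elim_finite_subfamily_closed C hCcl
      (by rw [Set.univ_inter]; exact hcon)
    obtain ⟨M, hM⟩ := T.exists_le
    obtain ⟨z, hz⟩ := hne M
    have hmem : z ∈ ⋂ l ∈ T, C l := Set.mem_iInter₂.mpr fun l hl => hmono l M (hM l hl) hz
    have : z ∈ (Set.univ : Set X) ∩ ⋂ l ∈ T, C l := ⟨trivial, hmem⟩
    rw [hT] at this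
    exact this
  obtain ⟨z, hz⟩ := hinter
  refine ⟨z, Subtype.ext (funext fun l => ?_)⟩
  exact Set.mem_iInter.mp hz l

end ForwardShadow

lemma forward_direction {G X : Type} [Group G] [TopologicalSpace X] [CompactSpace X] [T2Space X]
    [TotallyDisconnectedSpace X] (Φ : DynAction G X) (S : Finset G)
    (hsh : ShadowingProperty Φ (S : Set G)) :
    ∃ P : SubshiftInvSysPkg G, P.sys.ML ∧
      (∀ l : P.Idx, ∃ B : Finset G, IsSFTOver B (P.sys.Y l)) ∧
      ∃ f : X → ↥P.sys.limitSet, IsConjugacy Φ P.sys.limitDyn f := by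
  classical
  refine ⟨{ Idx := PartIdx X, directed := inferInstance, sys := fwdSys Φ S }, fwdSys_ML Φ S hsh, ?_, ?_⟩
  · intro l
    exact ⟨insert 1 S, pY_SFT Φ S l⟩
  · exact ⟨fwdF Φ S, fwdF_cont Φ S, ⟨fwdF_injective Φ S, fwdF_surjective Φ S hsh⟩,
      fwdF_equivariant Φ S⟩

section Reverse
variable {G : Type} [Group G]

lemma termY_compact (P : SubshiftInvSysPkg G) (l : P.Idx) : CompactSpace ↥(P.sys.Y l) := by
  haveI : CompactSpace (G → P.sys.A l) := by infer_instance
  exact isCompact_iff_compactSpace.mp ((P.sys.subshift l).1.isCompact)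

lemma limit_closed (P : SubshiftInvSysPkg G) : IsClosed P.sys.limitSet := by
  have : P.sys.limitSet =
      ⋂ (l : P.Idx), ⋂ (m : P.Idx), ⋂ (h : l ≤ m),
        {x : ∀ k : P.Idx, ↥(P.sys.Y k) | P.sys.bond h (x m) = x l} := by
    ext x
    simp only [SubshiftInvSys.limitSet, Set.mem_setOf_eq, Set.mem_iInter]
  rw [this]
  refine isClosed_iInter fun l => isClosed_iInter fun m => isClosed_iInter fun h => ?_
  exact isClosed_eq ((P.sys.bond_cont h).comp (continuous_apply m)) (continuous_apply l)

lemma limit_compact (P : SubshiftInvSysPkg G) : CompactSpace ↥P.sys.limitSet := by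
  haveI : ∀ k : P.Idx, CompactSpace ↥(P.sys.Y k) := termY_compact P
  haveI : CompactSpace (∀ k : P.Idx, ↥(P.sys.Y k)) := by infer_instance
  exact isCompact_iff_compactSpace.mp (limit_closed P).isCompact

/-- Lifting through the ML condition: any element of the stable range at level `l`
is the `l`-th coordinate of a point of the inverse limit. -/
lemma stable_range_lift (P : SubshiftInvSysPkg G) {l m : P.Idx} (h : l ≤ m)
    (hstable : ∀ n : P.Idx, ∀ h' : m ≤ n,
      Set.range (P.sys.bond (h.trans h')) = Set.range (P.sys.bond h))
    (hY : ∀ k : P.Idx, Nonempty ↥(P.sys.Y k)) (a : ↥(P.sys.Y m)) :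
    ∃ z : ↥P.sys.limitSet, z.1 l = P.sys.bond h a := by
  classical
  set c : ↥(P.sys.Y l) := P.sys.bond h a with hc
  let Z : Finset P.Idx → Set (∀ k : P.Idx, ↥(P.sys.Y k)) := fun T =>
    {x | (∀ p, p ∈ T → ∀ q, q ∈ T → ∀ hpq : p ≤ q, P.sys.bond hpq (x q) = x p) ∧
      ∀ q, q ∈ T → ∀ hlq : l ≤ q, P.sys.bond hlq (x q) = c}
  have hZclosed : ∀ T, IsClosed (Z T) := by
    intro T
    have : Z T = (⋂ p ∈ T, ⋂ q ∈ T, ⋂ hpq : p ≤ q,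
        {x : ∀ k : P.Idx, ↥(P.sys.Y k) | P.sys.bond hpq (x q) = x p}) ∩
        (⋂ q ∈ T, ⋂ hlq : l ≤ q,
          {x : ∀ k : P.Idx, ↥(P.sys.Y k) | P.sys.bond hlq (x q) = c}) := by
      ext x
      simp only [Z, Set.mem_setOf_eq, Set.mem_inter_iff, Set.mem_iInter]
    rw [this]
    refine IsClosed.inter ?_ ?_
    · refine isClosed_biInter fun p _ => isClosed_biInter fun q _ => isClosed_iInter fun hpq => ?_
      exact isClosed_eq ((P.sys.bond_cont hpq).comp (continuous_apply q)) (continuous_apply p)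
    · refine isClosed_biInter fun q _ => isClosed_iInter fun hlq => ?_
      exact isClosed_eq ((P.sys.bond_cont hlq).comp (continuous_apply q)) continuous_const
  have hZne : ∀ T, (Z T).Nonempty := by
    intro T
    haveI : Nonempty P.Idx := ⟨l⟩
    haveI : IsDirected P.Idx (· ≤ ·) := P.directed
    obtain ⟨n, hn⟩ := (T ∪ {l, m}).exists_le
    have hln : l ≤ n := hn l (by simp)
    have hmn : m ≤ n := hn m (by simp)
    have : c ∈ Set.range (P.sys.bond (h.trans hmn)) := by
      rw [hstable n hmn]; exact ⟨a, rfl⟩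
    obtain ⟨b, hb⟩ := this
    refine ⟨fun k => if hk : k ≤ n then P.sys.bond hk b else (hY k).some, ?_, ?_⟩
    · intro p hp q hq hpq
      have hqn : q ≤ n := hn q (Finset.mem_union_left _ hq)
      have hpn : p ≤ n := hn p (Finset.mem_union_left _ hp)
      simp only [dif_pos hqn, dif_pos hpn]
      rw [P.sys.bond_comp]
    · intro q hq hlq
      have hqn : q ≤ n := hn q (Finset.mem_union_left _ hq)
      simp only [dif_pos hqn]
      rw [P.sys.bond_comp]
      exact hb
  have hinter : (⋂ T, Z T).Nonempty := by
    haveI : ∀ k : P.Idx, CompactSpace ↥(P.sys.Y k) := termY_compact P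
    haveI : CompactSpace (∀ k : P.Idx, ↥(P.sys.Y k)) := by infer_instance
    by_contra hcon
    rw [Set.not_nonempty_iff_eq_empty] at hcon
    obtain ⟨Ts, hTs⟩ := isCompact_univ.elim_finite_subfamily_closed Z hZclosed
      (by rw [Set.univ_inter]; exact hcon)
    obtain ⟨x, hx⟩ := hZne (Ts.biUnion id)
    have hmem : x ∈ ⋂ T ∈ Ts, Z T := by
      refine Set.mem_iInter₂.mpr fun T hT => ?_
      obtain ⟨h1, h2⟩ := hx
      exact ⟨fun p hp q hq hpq => h1 p (Finset.mem_biUnion.mpr ⟨T, hT, hp⟩)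
          q (Finset.mem_biUnion.mpr ⟨T, hT, hq⟩) hpq,
        fun q hq hlq => h2 q (Finset.mem_biUnion.mpr ⟨T, hT, hq⟩) hlq⟩
    have : x ∈ (Set.univ : Set (∀ k : P.Idx, ↥(P.sys.Y k))) ∩ ⋂ T ∈ Ts, Z T :=
      ⟨trivial, hmem⟩
    rw [hTs] at this
    exact this
  obtain ⟨x, hx⟩ := hinter
  have hxZ : ∀ T, x ∈ Z T := Set.mem_iInter.mp hx
  have hxL : x ∈ P.sys.limitSet := by
    intro p q hpq
    exact (hxZ {p, q}).1 p (by simp) q (by simp) hpq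
  refine ⟨⟨x, hxL⟩, ?_⟩
  have := (hxZ {l}).2 l (by simp) (le_refl l)
  rw [P.sys.bond_refl] at this
  exact this
end Reverse

section Reverse2
variable {G : Type} [Group G]

lemma limit_cyl_nbhd (P : SubshiftInvSysPkg G) {O : Set ↥P.sys.limitSet} (hO : IsOpen O)
    {z : ↥P.sys.limitSet} (hz : z ∈ O) :
    ∃ (I : Finset P.Idx) (D : P.Idx → Finset G),
      ∀ z' : ↥P.sys.limitSet, (∀ k ∈ I, ∀ b ∈ D k, (z'.1 k).1 b = (z.1 k).1 b) → z' ∈ O := by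
  classical
  obtain ⟨O₁, hO₁, rfl⟩ := isOpen_induced_iff.mp hO
  obtain ⟨I, u, hu, hsub⟩ := isOpen_pi_iff.mp hO₁ z.1 hz
  have hD : ∀ k : P.Idx, ∃ Dk : Finset G, k ∈ I →
      ∀ y : ↥(P.sys.Y k), (∀ b ∈ Dk, y.1 b = (z.1 k).1 b) → y ∈ u k := by
    intro k
    by_cases hk : k ∈ I
    · obtain ⟨Dk, hDk⟩ := exists_finset_cylinder_subset_subtype (hu k hk).1 (hu k hk).2
      exact ⟨Dk, fun _ => hDk⟩
    · exact ⟨∅, fun h => absurd h hk⟩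
  choose D hD using hD
  refine ⟨I, D, fun z' hz' => ?_⟩
  refine hsub ?_
  intro k hk
  exact hD k hk (z'.1 k) (fun b hb => hz' k hk b hb)

lemma bond_window (P : SubshiftInvSysPkg G) {l m : P.Idx} (h : l ≤ m) (Dl : Finset G) :
    ∃ E : Finset G, ∀ u v : ↥(P.sys.Y m), (∀ b ∈ E, u.1 b = v.1 b) →
      ∀ b ∈ Dl, (P.sys.bond h u).1 b = (P.sys.bond h v).1 b := by
  haveI : CompactSpace ↥(P.sys.Y m) := termY_compact P m
  haveI : Finite {b : G // b ∈ Dl} := by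
    have : Fintype {b : G // b ∈ Dl} := FinsetCoe.fintype Dl
    exact Finite.of_fintype _
  let ψ : ↥(P.sys.Y m) → ({b : G // b ∈ Dl} → P.sys.A l) :=
    fun u => fun b => (P.sys.bond h u).1 b.1
  have hψ : Continuous ψ := by
    refine continuous_pi fun b => ?_
    exact (continuous_apply b.1).comp (continuous_subtype_val.comp (P.sys.bond_cont h))
  obtain ⟨E, hE⟩ := exists_uniform_window hψ
  refine ⟨E, fun u v huv b hb => ?_⟩
  have := congrFun (hE u v huv) ⟨b, hb⟩
  exact this

lemma cover_refine (P : SubshiftInvSysPkg G) [Nonempty P.Idx]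
    (hL : Nonempty ↥P.sys.limitSet)
    {𝒰 : Finset (Set ↥P.sys.limitSet)} (h𝒰 : IsFOC 𝒰) :
    ∃ (lst : P.Idx) (F : Finset G), ∀ z : ↥P.sys.limitSet, ∃ U ∈ 𝒰,
      ∀ z' : ↥P.sys.limitSet, (∀ b ∈ F, (z'.1 lst).1 b = (z.1 lst).1 b) → z' ∈ U := by
  classical
  haveI : IsDirected P.Idx (· ≤ ·) := P.directed
  haveI := limit_compact P
  have hcov : ∀ z : ↥P.sys.limitSet, ∃ U, U ∈ 𝒰 ∧ z ∈ U := by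
    intro z
    have : z ∈ ⋃₀ (𝒰 : Set (Set ↥P.sys.limitSet)) := by rw [h𝒰.2]; trivial
    obtain ⟨U, hU, hzU⟩ := this
    exact ⟨U, hU, hzU⟩
  choose Uz hUz hzUz using hcov
  -- one-level cylinder neighborhoods
  have hF : ∀ z : ↥P.sys.limitSet, ∃ (lz : P.Idx) (Fz : Finset G),
      ∀ z' : ↥P.sys.limitSet, (∀ b ∈ Fz, (z'.1 lz).1 b = (z.1 lz).1 b) → z' ∈ Uz z := by
    intro z
    obtain ⟨I, D, hID⟩ := limit_cyl_nbhd P (h𝒰.1 _ (hUz z)) (hzUz z)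
    obtain ⟨lz, hlz⟩ := I.exists_le
    have h1 : ∀ k : P.Idx, ∃ E : Finset G, k ∈ I →
        ∀ z' : ↥P.sys.limitSet, (∀ b ∈ E, (z'.1 lz).1 b = (z.1 lz).1 b) →
          ∀ b ∈ D k, (z'.1 k).1 b = (z.1 k).1 b := by
      intro k
      by_cases hk : k ∈ I
      · obtain ⟨E, hE⟩ := bond_window P (hlz k hk) (D k)
        refine ⟨E, fun _ z' hagree b hb => ?_⟩
        have h2 := hE (z'.1 lz) (z.1 lz) hagree b hb
        rw [z'.2 k lz (hlz k hk), z.2 k lz (hlz k hk)] at h2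
        exact h2
      · exact ⟨∅, fun h => absurd h hk⟩
    choose E hE using h1
    refine ⟨lz, I.biUnion E, fun z' hagree => ?_⟩
    refine hID z' fun k hk b hb => ?_
    exact hE k hk z' (fun b' hb' => hagree b' (Finset.mem_biUnion.mpr ⟨k, hk, hb'⟩)) b hb
  choose lz Fz hFz using hF
  -- compactness
  let N : ↥P.sys.limitSet → Set ↥P.sys.limitSet :=
    fun z => {z' | ∀ b ∈ Fz z, (z'.1 (lz z)).1 b = (z.1 (lz z)).1 b}
  have hNopen : ∀ z, IsOpen (N z) := by
    intro z
    have : N z = ⋂ b ∈ Fz z, {z' : ↥P.sys.limitSet | (z'.1 (lz z)).1 b = (z.1 (lz z)).1 b} := by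
      ext z'; simp [N]
    rw [this]
    refine isOpen_biInter_finset fun b _ => ?_
    have hc : Continuous (fun z' : ↥P.sys.limitSet => (z'.1 (lz z)).1 b) :=
      (continuous_apply b).comp (continuous_subtype_val.comp
        ((continuous_apply (lz z)).comp continuous_subtype_val))
    exact hc.isOpen_preimage {(z.1 (lz z)).1 b} (isOpen_discrete _)
  obtain ⟨T, hT⟩ := isCompact_univ.elim_finite_subcover N hNopen
    (fun z _ => Set.mem_iUnion.mpr ⟨z, fun b _ => rfl⟩)
  obtain ⟨lst, hlst⟩ := (T.image lz).exists_le
  have h2 : ∀ w : ↥P.sys.limitSet, ∃ E : Finset G, w ∈ T →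
      ∀ z' z'' : ↥P.sys.limitSet, (∀ b ∈ E, (z'.1 lst).1 b = (z''.1 lst).1 b) →
        ∀ b ∈ Fz w, (z'.1 (lz w)).1 b = (z''.1 (lz w)).1 b := by
    intro w
    by_cases hw : w ∈ T
    · have hle : lz w ≤ lst := hlst _ (Finset.mem_image_of_mem lz hw)
      obtain ⟨E, hE⟩ := bond_window P hle (Fz w)
      refine ⟨E, fun _ z' z'' hagree b hb => ?_⟩
      have h3 := hE (z'.1 lst) (z''.1 lst) hagree b hb
      rw [z'.2 (lz w) lst hle, z''.2 (lz w) lst hle] at h3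
      exact h3
    · exact ⟨∅, fun h => absurd h hw⟩
  choose E hE using h2
  refine ⟨lst, T.biUnion E, fun z => ?_⟩
  obtain ⟨w, hw, hzN⟩ := Set.mem_iUnion₂.mp (hT (Set.mem_univ z))
  refine ⟨Uz w, hUz w, fun z' hagree => ?_⟩
  refine hFz w z' fun b hb => ?_
  have ha : (z'.1 (lz w)).1 b = (z.1 (lz w)).1 b :=
    hE w hw z' z (fun b' hb' => hagree b' (Finset.mem_biUnion.mpr ⟨w, hw, hb'⟩)) b hb
  rw [ha]
  exact hzN b hb

end Reverse2

section Reverse3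
variable {G : Type} [Group G]

lemma mem_genBall_one {S : Set G} {s : G} (hs : s ∈ S) : s ∈ genBall S 1 := by
  refine Or.inr ?_
  simp only [Set.mem_iUnion]
  exact ⟨s, hs, Or.inl ⟨1, rfl, by group⟩⟩

lemma limit_shadowing (P : SubshiftInvSysPkg G) (hML : P.sys.ML)
    (hSFT : ∀ l : P.Idx, ∃ B : Finset G, IsSFTOver B (P.sys.Y l))
    {S : Finset G} (hgen : Subgroup.closure (S : Set G) = ⊤)
    [Nonempty P.Idx] (hL : Nonempty ↥P.sys.limitSet) :
    ShadowingProperty P.sys.limitDyn (S : Set G) := by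
  classical
  intro 𝒰 h𝒰
  obtain ⟨lst, F, hcov⟩ := cover_refine P hL h𝒰
  obtain ⟨m0, h0, hstable⟩ := hML lst
  obtain ⟨B, hBsft⟩ := hSFT m0
  obtain ⟨ℱ, hB⟩ := hBsft
  obtain ⟨D, hD⟩ := bond_window P h0 F
  have hDB : ((↑(D ∪ B) : Set G)).Finite := (D ∪ B).finite_toSet
  obtain ⟨N, hN⟩ := finite_subset_genBall hgen hDB
  have hEfin : (genBall (S : Set G) N).Finite := genBall_finite S.finite_toSet N
  set E : Finset G := hEfin.toFinset with hEdef
  have hmemE : ∀ {b : G}, b ∈ E ↔ b ∈ genBall (S : Set G) N :=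
    fun {b} => Set.Finite.mem_toFinset _
  haveI : Fintype ({b : G // b ∈ E} → P.sys.A m0) := Fintype.ofFinite _
  let piece : ({b : G // b ∈ E} → P.sys.A m0) → Set ↥P.sys.limitSet :=
    fun q => {z | ∀ b : {b : G // b ∈ E}, (z.1 m0).1 b.1 = q b}
  have hpieceOpen : ∀ q, IsOpen (piece q) := by
    intro q
    have : piece q = ⋂ b : {b : G // b ∈ E},
        {z : ↥P.sys.limitSet | (z.1 m0).1 b.1 = q b} := by
      ext z; simp [piece]
    rw [this]
    refine isOpen_iInter_of_finite fun b => ?_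
    have hc : Continuous (fun z : ↥P.sys.limitSet => (z.1 m0).1 b.1) :=
      (continuous_apply b.1).comp (continuous_subtype_val.comp
        ((continuous_apply m0).comp continuous_subtype_val))
    exact hc.isOpen_preimage {q b} (isOpen_discrete _)
  refine ⟨Finset.univ.image piece, ⟨?_, ?_⟩, ?_⟩
  · intro U hU
    obtain ⟨q, _, rfl⟩ := Finset.mem_image.mp hU
    exact hpieceOpen q
  · apply Set.eq_univ_of_forall
    intro z
    refine ⟨piece (fun b => (z.1 m0).1 b.1), ?_, fun b => rfl⟩
    simp only [Finset.coe_image, Set.mem_image, Finset.mem_coe]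
    exact ⟨_, Finset.mem_univ _, rfl⟩
  · intro x hx
    obtain ⟨V, hV1, hV2⟩ := hx
    set ω : G → G → P.sys.A m0 := fun g => ((x g).1 m0).1 with hω
    -- the key relation coming from the pseudo-orbit conditions
    have hrel : ∀ g : G, ∀ s ∈ S, ∀ b ∈ E, ω (s * g) b = ω g (b * s) := by
      intro g s hs b hb
      have hmem := hV2 g s (Finset.mem_coe.mpr hs)
      obtain ⟨q, _, hq⟩ := Finset.mem_image.mp (hV1 (s * g))
      rw [← hq] at hmem
      have e1 : ω (s * g) b = q ⟨b, hb⟩ := hmem.1 ⟨b, hb⟩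
      have e2 : ((P.sys.limitDyn.act s (x g)).1 m0).1 b = q ⟨b, hb⟩ := hmem.2 ⟨b, hb⟩
      have e3 : ((P.sys.limitDyn.act s (x g)).1 m0).1 b = ω g (b * s) := rfl
      rw [e1, ← e2, e3]
    -- orbit stitching
    have hkey : ∀ j : ℕ, ∀ u ∈ genBall (S : Set G) j, ∀ g k : G, ∀ i : ℕ,
        k ∈ genBall (S : Set G) i → i + j ≤ N → ω (u * g) k = ω g (k * u) := by
      intro j
      induction j with
      | zero =>
        intro u hu g k i hk hij
        have : u = 1 := hu
        subst this
        rw [one_mul, mul_one]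
      | succ j ih =>
        intro u hu g k i hk hij
        rcases hu with hu | hu
        · exact ih u hu g k i hk (by omega)
        · simp only [Set.mem_iUnion] at hu
          obtain ⟨s, hs, hu⟩ := hu
          rcases hu with ⟨u', hu', rfl⟩ | ⟨u', hu', rfl⟩
          · -- u = s * u'
            have e1 : s * u' * g = s * (u' * g) := by group
            have hkE : k ∈ E := hmemE.mpr (genBall_mono _ (by omega : i ≤ N) hk)
            rw [e1, hrel (u' * g) s hs k hkE]
            have hks : k * s ∈ genBall (S : Set G) (i + 1) :=
              genBall_mul hk (mem_genBall_one hs)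
            rw [ih u' hu' g (k * s) (i + 1) hks (by omega)]
            congr 1
            group
          · -- u = s⁻¹ * u'
            have hks : k * s⁻¹ ∈ genBall (S : Set G) (i + 1) :=
              genBall_mul hk (genBall_inv (mem_genBall_one hs))
            have hksE : k * s⁻¹ ∈ E := hmemE.mpr (genBall_mono _ (by omega : i + 1 ≤ N) hks)
            have e1 := hrel (s⁻¹ * u' * g) s hs (k * s⁻¹) hksE
            have e2 : s * (s⁻¹ * u' * g) = u' * g := by group
            have e3 : k * s⁻¹ * s = k := by group
            rw [e2, e3] at e1
            rw [← e1, ih u' hu' g (k * s⁻¹) (i + 1) hks (by omega)]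
            congr 1
            group
    -- the stitched configuration
    set y : G → P.sys.A m0 := fun g => ω g 1 with hy
    have hagree : ∀ g : G, ∀ k, k ∈ genBall (S : Set G) N →
        shift G (P.sys.A m0) g y k = ω g k := by
      intro g k hk
      have : shift G (P.sys.A m0) g y k = ω (k * g) 1 := rfl
      rw [this, hkey N k hk g 1 0 (one_mem_genBall _ 0) (by omega), one_mul]
    have hyY : y ∈ P.sys.Y m0 := by
      rw [hB]
      intro g P' hP' hcyl
      have hwg : ((x g).1 m0).1 ∈ P.sys.Y m0 := ((x g).1 m0).2
      have hwg' := (Set.ext_iff.mp hB _).mp hwg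
      refine hwg' 1 P' hP' ?_
      intro b hb
      have hbN : b ∈ genBall (S : Set G) N := hN (Finset.mem_coe.mpr (Finset.mem_union_right D hb))
      show ((x g).1 m0).1 (b * 1) = P' b
      rw [mul_one]
      have : ω g b = shift G (P.sys.A m0) g y b := (hagree g b hbN).symm
      show ω g b = P' b
      rw [this]
      exact hcyl b hb
    obtain ⟨z, hz⟩ := stable_range_lift P h0 hstable (fun k => ⟨hL.some.1 k⟩) ⟨y, hyY⟩
    refine ⟨z, fun g => ?_⟩
    obtain ⟨U, hU, hclose⟩ := hcov (x g)
    refine ⟨U, hU, ?_, hclose (x g) (fun b hb => rfl)⟩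
    apply hclose
    intro b hb
    have eL : (P.sys.limitDyn.act g z).1 lst
        = P.sys.bond h0 ((P.sys.termDyn m0).act g ⟨y, hyY⟩) := by
      show (P.sys.termDyn lst).act g (z.1 lst) = _
      rw [hz]
      exact P.sys.bond_equivariant h0 g ⟨y, hyY⟩
    have eR : (x g).1 lst = P.sys.bond h0 ((x g).1 m0) := ((x g).2 lst m0 h0).symm
    rw [eL, eR]
    refine hD _ _ ?_ b hb
    intro d hdD
    have hdN : d ∈ genBall (S : Set G) N :=
      hN (Finset.mem_coe.mpr (Finset.mem_union_left B hdD))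
    exact hagree g d hdN
end Reverse3

section Glue
variable {G : Type} [Group G]

lemma shadowing_of_subsingleton {X : Type} [TopologicalSpace X]
    (hsub : ∀ a b : X, a = b) (Φ : DynAction G X) (S : Set G) :
    ShadowingProperty Φ S := by
  intro 𝒰 h𝒰
  refine ⟨𝒰, h𝒰, fun x _ => ⟨x 1, fun g => ?_⟩⟩
  have hx : x g ∈ ⋃₀ (𝒰 : Set (Set X)) := by rw [h𝒰.2]; trivial
  obtain ⟨U, hU, hxU⟩ := hx
  exact ⟨U, hU, by rw [hsub (Φ.act g (x 1)) (x g)]; exact hxU, hxU⟩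

lemma shadowing_of_conjugacy {X Y : Type} [TopologicalSpace X] [TopologicalSpace Y]
    [CompactSpace X] [T2Space Y] (ΦX : DynAction G X) (ΦY : DynAction G Y) (f : X → Y)
    (hf : IsConjugacy ΦX ΦY f) (S : Set G) (hY : ShadowingProperty ΦY S) :
    ShadowingProperty ΦX S := by
  classical
  obtain ⟨hfc, hfb, hfe⟩ := hf
  let e : X ≃ Y := Equiv.ofBijective f hfb
  have hec : Continuous e := hfc
  let homeo : X ≃ₜ Y := hec.homeoOfEquivCompactToT2
  have hopen : ∀ U : Set X, IsOpen U → IsOpen (f '' U) := by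
    intro U hU
    have : f '' U = homeo '' U := rfl
    rw [this]
    exact homeo.isOpenMap U hU
  intro 𝒰 h𝒰
  have h𝒰' : IsFOC (𝒰.image (fun U => f '' U)) := by
    constructor
    · intro U' hU'
      obtain ⟨U, hU, rfl⟩ := Finset.mem_image.mp hU'
      exact hopen U (h𝒰.1 U hU)
    · apply Set.eq_univ_of_forall
      intro y
      obtain ⟨x, rfl⟩ := hfb.2 y
      have : x ∈ ⋃₀ (𝒰 : Set (Set X)) := by rw [h𝒰.2]; trivial
      obtain ⟨U, hU, hxU⟩ := this
      refine ⟨f '' U, ?_, ⟨x, hxU, rfl⟩⟩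
      simp only [Finset.coe_image, Set.mem_image, Finset.mem_coe]
      exact ⟨U, hU, rfl⟩
  obtain ⟨𝒱', h𝒱', hsh⟩ := hY _ h𝒰'
  refine ⟨𝒱'.image (fun V => f ⁻¹' V), ⟨?_, ?_⟩, ?_⟩
  · intro V hV
    obtain ⟨V', hV', rfl⟩ := Finset.mem_image.mp hV
    exact (h𝒱'.1 V' hV').preimage hfc
  · apply Set.eq_univ_of_forall
    intro x
    have : f x ∈ ⋃₀ (𝒱' : Set (Set Y)) := by rw [h𝒱'.2]; trivial
    obtain ⟨V', hV', hxV'⟩ := this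
    refine ⟨f ⁻¹' V', ?_, hxV'⟩
    simp only [Finset.coe_image, Set.mem_image, Finset.mem_coe]
    exact ⟨V', hV', rfl⟩
  · intro x hx
    obtain ⟨V, hV1, hV2⟩ := hx
    have hW : ∀ g : G, ∃ W, W ∈ 𝒱' ∧ V g = f ⁻¹' W := by
      intro g
      obtain ⟨W, hW, hWV⟩ := Finset.mem_image.mp (hV1 g)
      exact ⟨W, hW, hWV.symm⟩
    choose W hW1 hW2 using hW
    have hpo : IsPseudoOrbit ΦY S 𝒱' (fun g => f (x g)) := by
      refine ⟨W, hW1, fun g s hs => ?_⟩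
      obtain ⟨hm1, hm2⟩ := hV2 g s hs
      rw [hW2 (s * g)] at hm1 hm2
      constructor
      · exact hm1
      · rw [← hfe s (x g)]
        exact hm2
    obtain ⟨z', hz'⟩ := hsh _ hpo
    refine ⟨e.symm z', fun g => ?_⟩
    obtain ⟨U', hU', hz'U', hxU'⟩ := hz' g
    obtain ⟨U, hU, rfl⟩ := Finset.mem_image.mp hU'
    have hfz : f (e.symm z') = z' := e.apply_symm_apply z'
    refine ⟨U, hU, ?_, ?_⟩
    · have : ΦY.act g z' = f (ΦX.act g (e.symm z')) := by
        rw [hfe g (e.symm z'), hfz]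
      rw [this] at hz'U'
      obtain ⟨w, hwU, hw⟩ := hz'U'
      rwa [← hfb.1 hw]
    · obtain ⟨w, hwU, hw⟩ := hxU'
      rwa [← hfb.1 hw]

lemma reverse_direction {X : Type} [TopologicalSpace X] [CompactSpace X] [T2Space X]
    (Φ : DynAction G X) (S : Finset G) (hgen : Subgroup.closure (S : Set G) = ⊤)
    (P : SubshiftInvSysPkg G) (hML : P.sys.ML)
    (hSFT : ∀ l : P.Idx, ∃ B : Finset G, IsSFTOver B (P.sys.Y l))
    (f : X → ↥P.sys.limitSet) (hconj : IsConjugacy Φ P.sys.limitDyn f) :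
    ShadowingProperty Φ (S : Set G) := by
  by_cases hsub : ∀ a b : X, a = b
  · exact shadowing_of_subsingleton hsub Φ _
  · push_neg at hsub
    obtain ⟨a, b, hab⟩ := hsub
    have hLne : Nonempty ↥P.sys.limitSet := ⟨f a⟩
    haveI hIdx : Nonempty P.Idx := by
      by_contra hI
      rw [not_nonempty_iff] at hI
      refine hab ?_
      have : f a = f b := Subtype.ext (funext fun l => (hI.elim l))
      exact hconj.2.1.1 this
    exact shadowing_of_conjugacy Φ P.sys.limitDyn f hconj _
      (limit_shadowing P hML hSFT hgen hLne)

end Glue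


/-- **Corollary 1.2.** For a compact totally disconnected Hausdorff space and a finitely
generated group `G` with finite generator `S`, `Φ` has the `S`-shadowing property iff
`(X,G,Φ)` is conjugate to the inverse limit of an ML inverse system of shifts of finite
type. -/
theorem shadowing_iff_conjugate_invlim_SFT
    {G X : Type} [Group G] [Countable G] [TopologicalSpace X]
    [CompactSpace X] [T2Space X] [TotallyDisconnectedSpace X]
    (Φ : DynAction G X) (S : Finset G)
    (hgen : Subgroup.closure (S : Set G) = ⊤) :
    ShadowingProperty Φ (S : Set G) ↔
      ∃ P : SubshiftInvSysPkg G,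
        P.sys.ML ∧
        (∀ l : P.Idx, ∃ B : Finset G, IsSFTOver B (P.sys.Y l)) ∧
        ∃ f : X → ↥P.sys.limitSet, IsConjugacy Φ P.sys.limitDyn f := by
  constructor
  · intro hsh
    exact forward_direction Φ S hsh
  · rintro ⟨P, hML, hSFT, f, hconj⟩
    exact reverse_direction Φ S hgen P hML hSFT f hconj
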